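/- Let (K^{(m)})_{m≥0} be a Markov chain on ℕ with K^{(0)} finite, transition p(K^{(m+1)} = k | K^{(m)}) = Poisson(k; λ(K^{(m)})) where λ(K) = α Σ_{k'=1}^{K} β/(k'+β−1) for fixed α, β > 0. Then P(∃ m : K^{(m)} = 0) = 1, i.e., the chain is absorbed at 0 with probability one. -/

import Mathlib

open Finset MeasureTheory

/-- The CIBP mean function `λ(K) = α ∑_{k=1}^K β/(k+β-1)`. -/
noncomputable def cibpLam (α β : ℝ) (K : ℕ) : ℝ :=
  α * ∑ k ∈ Finset.range K, β / ((k : ℝ) + 1 + β - 1)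

/-- The Poisson probability mass `Poisson(k; r) = exp(-r) r^k / k!`. -/
noncomputable def poisProb (r : ℝ) (k : ℕ) : ℝ :=
  Real.exp (-r) * r ^ k / (Nat.factorial k)

section analytic

lemma real_exp_tsum (x : ℝ) : Real.exp x = ∑' n : ℕ, x ^ n / n.factorial := by
  rw [Real.exp_eq_exp_ℝ, NormedSpace.exp_eq_tsum_div]

lemma pois_nonneg {r : ℝ} (hr : 0 ≤ r) (k : ℕ) : 0 ≤ poisProb r k := by
  unfold poisProb; positivity

lemma summable_pois (r : ℝ) : Summable (fun k => poisProb r k) := by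
  unfold poisProb
  simpa [mul_div_assoc] using (Real.summable_pow_div_factorial r).mul_left (Real.exp (-r))

lemma tsum_pois (r : ℝ) : ∑' k, poisProb r k = 1 := by
  unfold poisProb
  rw [show (fun k : ℕ => Real.exp (-r) * r ^ k / (Nat.factorial k))
      = fun k : ℕ => Real.exp (-r) * (r ^ k / (Nat.factorial k)) by
    funext k; ring]
  rw [tsum_mul_left, ← real_exp_tsum, ← Real.exp_add]
  simp

lemma pois_succ (r : ℝ) (k : ℕ) : ((k:ℝ)+1) * poisProb r (k+1) = r * poisProb r k := by
  unfold poisProb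
  rw [Nat.factorial_succ, pow_succ]
  push_cast
  field_simp

lemma summable_mul_pois (r : ℝ) : Summable (fun k : ℕ => (k:ℝ) * poisProb r k) := by
  rw [← summable_nat_add_iff 1]
  have : (fun k : ℕ => ((k:ℕ)+1 : ℝ) * poisProb r (k+1)) = fun k => r * poisProb r k := by
    funext k; push_cast; exact pois_succ r k
  simpa [this] using (summable_pois r).mul_left r

lemma tsum_mul_pois (r : ℝ) : ∑' k : ℕ, (k:ℝ) * poisProb r k = r := by
  rw [Summable.tsum_eq_zero_add (summable_mul_pois r)]
  have : (fun k : ℕ => ((k:ℕ)+1 : ℝ) * poisProb r (k+1)) = fun k => r * poisProb r k := by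
    funext k; push_cast; exact pois_succ r k
  simp only [Nat.cast_zero, zero_mul, zero_add]
  push_cast
  rw [this, tsum_mul_left, tsum_pois, mul_one]

end analytic


section lam

lemma lam_nonneg {α β : ℝ} (hα : 0 < α) (hβ : 0 < β) (j : ℕ) : 0 ≤ cibpLam α β j := by
  unfold cibpLam
  apply mul_nonneg hα.le
  apply Finset.sum_nonneg
  intro k _
  have : (0:ℝ) < (k:ℝ) + 1 + β - 1 := by
    have := Nat.cast_nonneg (α := ℝ) k; linarith
  positivity

lemma lam_mono {α β : ℝ} (hα : 0 < α) (hβ : 0 < β) {j j' : ℕ} (h : j ≤ j') :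
    cibpLam α β j ≤ cibpLam α β j' := by
  unfold cibpLam
  apply mul_le_mul_of_nonneg_left _ hα.le
  apply Finset.sum_le_sum_of_subset_of_nonneg (Finset.range_subset_range.2 h)
  intro k _ _
  have : (0:ℝ) < (k:ℝ) + 1 + β - 1 := by
    have := Nat.cast_nonneg (α := ℝ) k; linarith
  positivity

lemma harmonic_le (n : ℕ) : ∑ k ∈ Finset.range n, (1:ℝ)/((k:ℝ)+1) ≤ 2 * Real.sqrt n := by
  induction n with
  | zero => simp
  | succ n ih =>
    rw [Finset.sum_range_succ]
    have hs : Real.sqrt n ≤ Real.sqrt (n+1) := by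
      apply Real.sqrt_le_sqrt; push_cast; linarith
    have hsq : Real.sqrt ((n:ℝ)+1) * Real.sqrt ((n:ℝ)+1) = (n:ℝ)+1 :=
      Real.mul_self_sqrt (by positivity)
    have hle : Real.sqrt ((n:ℝ)+1) ≤ (n:ℝ)+1 := by
      nlinarith [Real.sqrt_nonneg ((n:ℝ)+1)]
    have key : (1:ℝ)/((n:ℝ)+1) ≤ 2 * (Real.sqrt ((n:ℝ)+1) - Real.sqrt n) := by
      have h1 : Real.sqrt (n:ℝ) * Real.sqrt (n:ℝ) = (n:ℝ) :=
        Real.mul_self_sqrt (Nat.cast_nonneg n)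
      have h2 : (Real.sqrt ((n:ℝ)+1) - Real.sqrt n) * (Real.sqrt ((n:ℝ)+1) + Real.sqrt n) = 1 := by
        nlinarith
      have hpos : (0:ℝ) < Real.sqrt ((n:ℝ)+1) + Real.sqrt n := by
        nlinarith [Real.sqrt_nonneg ((n:ℝ))]
      rw [div_le_iff₀ (by positivity)]
      nlinarith [Real.sqrt_nonneg ((n:ℝ))]
    push_cast
    push_cast at key ih
    linarith

lemma lam_le_sqrt {α β : ℝ} (hα : 0 < α) (hβ : 0 < β) (j : ℕ) :
    cibpLam α β j ≤ 2*α*(β+1) * Real.sqrt j := by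
  unfold cibpLam
  have hterm : ∀ k ∈ Finset.range j, β / ((k:ℝ) + 1 + β - 1) ≤ (β+1) * (1/((k:ℝ)+1)) := by
    intro k _
    have hk : (0:ℝ) ≤ (k:ℝ) := Nat.cast_nonneg k
    rw [div_le_iff₀ (by linarith)]
    have h : (β+1) * (1/((k:ℝ)+1)) = (β+1)/((k:ℝ)+1) := by ring
    rw [h, div_mul_eq_mul_div, le_div_iff₀ (by linarith)]
    nlinarith
  calc α * ∑ k ∈ Finset.range j, β / ((k : ℝ) + 1 + β - 1)
      ≤ α * ∑ k ∈ Finset.range j, (β+1) * (1/((k:ℝ)+1)) := by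
        apply mul_le_mul_of_nonneg_left (Finset.sum_le_sum hterm) hα.le
    _ = α * (β+1) * ∑ k ∈ Finset.range j, (1:ℝ)/((k:ℝ)+1) := by
        rw [← Finset.mul_sum]; ring
    _ ≤ α * (β+1) * (2 * Real.sqrt j) := by
        apply mul_le_mul_of_nonneg_left (harmonic_le j) (by positivity)
    _ = 2*α*(β+1) * Real.sqrt j := by ring

lemma exists_N {α β : ℝ} (hα : 0 < α) (hβ : 0 < β) :
    ∃ N : ℕ, 1 ≤ N ∧ ∀ j : ℕ, N ≤ j → cibpLam α β j ≤ (j:ℝ)/2 := by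
  set c := 2*α*(β+1) with hc
  have hc0 : 0 ≤ c := by positivity
  refine ⟨⌈(2*c)^2⌉₊ + 1, le_add_self, fun j hj => ?_⟩
  have hj' : ((2*c)^2 : ℝ) ≤ (j:ℝ) := by
    calc ((2*c)^2:ℝ) ≤ (⌈(2*c)^2⌉₊ : ℝ) := Nat.le_ceil _
    _ ≤ (j:ℝ) := by exact_mod_cast le_trans (Nat.le_succ _) hj
  have hsj : 2*c ≤ Real.sqrt j := by
    rw [show (2*c:ℝ) = Real.sqrt ((2*c)^2) by rw [Real.sqrt_sq (by positivity)]]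
    exact Real.sqrt_le_sqrt hj'
  have hsq : Real.sqrt j * Real.sqrt j = (j:ℝ) := Real.mul_self_sqrt (Nat.cast_nonneg j)
  calc cibpLam α β j ≤ c * Real.sqrt j := lam_le_sqrt hα hβ j
    _ ≤ (j:ℝ)/2 := by nlinarith [Real.sqrt_nonneg (j:ℝ)]

lemma exists_D {α β : ℝ} (hα : 0 < α) (hβ : 0 < β) : ∃ D : ℝ, 0 ≤ D ∧ ∀ j : ℕ, 1 ≤ j →
    cibpLam α β j + (D + 1/2) - (D + 1/2) * Real.exp (-(cibpLam α β j)) ≤ (j:ℝ) + D := by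
  obtain ⟨N, hN1, hN⟩ := exists_N hα hβ
  set L := cibpLam α β N with hL
  have hL0 : 0 ≤ L := lam_nonneg hα hβ N
  refine ⟨(L + 1) * Real.exp L, by positivity, fun j hj => ?_⟩
  set D := (L + 1) * Real.exp L with hD
  set r := cibpLam α β j with hr
  have hr0 : 0 ≤ r := lam_nonneg hα hβ j
  have hexp : 0 < Real.exp (-r) := Real.exp_pos _
  have hD0 : 0 ≤ D := by positivity
  rcases le_or_gt N j with hcase | hcase
  · have h1 : r ≤ (j:ℝ)/2 := hN j hcase
    have hj1 : (1:ℝ) ≤ (j:ℝ) := by exact_mod_cast hj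
    nlinarith [mul_nonneg (by linarith : (0:ℝ) ≤ D + 1/2) hexp.le]
  · have hrL : r ≤ L := lam_mono hα hβ (le_of_lt hcase)
    have hexpL : Real.exp (-L) ≤ Real.exp (-r) := Real.exp_le_exp.2 (by linarith)
    have hDe : L + 1 ≤ D * Real.exp (-r) := by
      have h4 : D * Real.exp (-L) = (L+1) := by
        rw [hD, mul_assoc, ← Real.exp_add]
        simp
      nlinarith [Real.exp_pos (-L)]
    have hj0 : (0:ℝ) ≤ (j:ℝ) := Nat.cast_nonneg j
    nlinarith [mul_nonneg (by norm_num : (0:ℝ) ≤ (1:ℝ)/2) hexp.le]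

end lam

section kernel
open ENNReal

noncomputable def cibpQ (α β : ℝ) (j k : ℕ) : ℝ≥0∞ :=
  ENNReal.ofReal (poisProb (cibpLam α β j) k)

noncomputable def cibpS (α β : ℝ) : ℕ → ℕ → ℝ≥0∞
  | 0, _ => 1
  | M+1, j => ∑' k : ℕ, cibpQ α β j (k+1) * cibpS α β M (k+1)

noncomputable def cibpT (α β D : ℝ) : ℕ → ℕ → ℝ≥0∞
  | 0, j => ENNReal.ofReal ((j:ℝ) + D)
  | M+1, j => ∑' k : ℕ, cibpQ α β j (k+1) * cibpT α β D M (k+1)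

variable {α β : ℝ}

lemma tsum_q (hα : 0 < α) (hβ : 0 < β) (j : ℕ) : ∑' k, cibpQ α β j k = 1 := by
  unfold cibpQ
  rw [← ENNReal.ofReal_tsum_of_nonneg (pois_nonneg (lam_nonneg hα hβ j)) (summable_pois _),
    tsum_pois]
  simp

lemma tsum_q_succ_le (hα : 0 < α) (hβ : 0 < β) (j : ℕ) :
    ∑' k : ℕ, cibpQ α β j (k+1) ≤ 1 := by
  have h := tsum_eq_zero_add' (f := fun k => cibpQ α β j k) ENNReal.summable
  rw [← tsum_q hα hβ j, h]
  exact le_add_self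

lemma S_le_one (hα : 0 < α) (hβ : 0 < β) : ∀ M j, cibpS α β M j ≤ 1 := by
  intro M
  induction M with
  | zero => intro j; simp [cibpS]
  | succ M ih =>
    intro j
    calc cibpS α β (M+1) j = ∑' k : ℕ, cibpQ α β j (k+1) * cibpS α β M (k+1) := rfl
      _ ≤ ∑' k : ℕ, cibpQ α β j (k+1) * 1 :=
        ENNReal.tsum_le_tsum fun k => mul_le_mul_right (ih (k+1)) _
      _ ≤ 1 := by simpa using tsum_q_succ_le hα hβ j

lemma S_antitone (hα : 0 < α) (hβ : 0 < β) (j : ℕ) :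
    Antitone fun M => cibpS α β M j := by
  have key : ∀ M, ∀ j, cibpS α β (M+1) j ≤ cibpS α β M j := by
    intro M
    induction M with
    | zero => intro j; simpa [cibpS] using S_le_one hα hβ 1 j
    | succ M ih =>
      intro j
      exact ENNReal.tsum_le_tsum fun k => mul_le_mul_right (ih (k+1)) _
  exact antitone_nat_of_succ_le fun M => key M j

/-- The key one-step drift inequality, ENNReal form. -/
lemma key_drift (hα : 0 < α) (hβ : 0 < β) {D : ℝ} (hD : 0 ≤ D)
    (hDkey : ∀ j : ℕ, 1 ≤ j →
      cibpLam α β j + (D + 1/2) - (D + 1/2) * Real.exp (-(cibpLam α β j)) ≤ (j:ℝ) + D)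
    (j : ℕ) (hj : 1 ≤ j) :
    ∑' k : ℕ, cibpQ α β j (k+1) * (ENNReal.ofReal (((k+1 : ℕ) : ℝ) + D) + ENNReal.ofReal (1/2))
      ≤ ENNReal.ofReal ((j:ℝ) + D) := by
  set r := cibpLam α β j with hr
  have hr0 : 0 ≤ r := lam_nonneg hα hβ j
  set E := D + 1/2 with hE
  have hE0 : 0 ≤ E := by rw [hE]; linarith
  set g : ℕ → ℝ := fun k => poisProb r k * ((k:ℝ) + E) with hg
  have hgnn : ∀ k, 0 ≤ g k := fun k => by
    have hk : (0:ℝ) ≤ (k:ℝ) + E := by positivity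
    exact mul_nonneg (pois_nonneg hr0 k) hk
  have hgsum : Summable g := by
    have h1 : Summable (fun k : ℕ => (k:ℝ) * poisProb r k) := summable_mul_pois r
    have h2 : Summable (fun k : ℕ => poisProb r k * E) := (summable_pois r).mul_right E
    have : g = fun k : ℕ => (k:ℝ) * poisProb r k + poisProb r k * E := by
      funext k; rw [hg]; ring
    rw [this]; exact h1.add h2
  have htsum : ∑' k, g k = r + E := by
    have : g = fun k : ℕ => (k:ℝ) * poisProb r k + poisProb r k * E := by
      funext k; rw [hg]; ring
    rw [this, Summable.tsum_add (summable_mul_pois r) ((summable_pois r).mul_right E),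
      tsum_mul_pois, tsum_mul_right, tsum_pois, one_mul]
  have hshift : Summable fun k => g (k+1) := by
    exact (summable_nat_add_iff 1).2 hgsum
  have htshift : ∑' k, g (k+1) = r + E - g 0 := by
    have h := Summable.tsum_eq_zero_add hgsum
    rw [htsum] at h
    linarith [h]
  have hg0 : g 0 = E * Real.exp (-r) := by
    rw [hg]; simp [poisProb]; ring
  -- termwise identification
  have hterm : ∀ k : ℕ,
      cibpQ α β j (k+1) * (ENNReal.ofReal (((k+1 : ℕ) : ℝ) + D) + ENNReal.ofReal (1/2))
        = ENNReal.ofReal (g (k+1)) := by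
    intro k
    rw [← ENNReal.ofReal_add (by positivity) (by norm_num)]
    rw [cibpQ, ← ENNReal.ofReal_mul (pois_nonneg hr0 (k+1))]
    congr 1
    rw [hg]
    push_cast
    ring
  calc ∑' k : ℕ, cibpQ α β j (k+1) * (ENNReal.ofReal (((k+1 : ℕ) : ℝ) + D) + ENNReal.ofReal (1/2))
      = ∑' k : ℕ, ENNReal.ofReal (g (k+1)) := by
        exact tsum_congr hterm
    _ = ENNReal.ofReal (∑' k, g (k+1)) :=
        (ENNReal.ofReal_tsum_of_nonneg (fun k => hgnn (k+1)) hshift).symm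
    _ ≤ ENNReal.ofReal ((j:ℝ) + D) := by
        apply ENNReal.ofReal_le_ofReal
        rw [htshift, hg0]
        have h5 := hDkey j hj
        rw [← hr] at h5
        linarith [h5]

lemma T_step (hα : 0 < α) (hβ : 0 < β) {D : ℝ} (hD : 0 ≤ D)
    (hDkey : ∀ j : ℕ, 1 ≤ j →
      cibpLam α β j + (D + 1/2) - (D + 1/2) * Real.exp (-(cibpLam α β j)) ≤ (j:ℝ) + D) :
    ∀ M j, 1 ≤ j →
      cibpT α β D (M+1) j + ENNReal.ofReal (1/2) * cibpS α β (M+1) j ≤ cibpT α β D M j := by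
  intro M
  induction M with
  | zero =>
    intro j hj
    have hcomb : cibpT α β D 1 j + ENNReal.ofReal (1/2) * cibpS α β 1 j
        = ∑' k : ℕ, cibpQ α β j (k+1) *
            (ENNReal.ofReal (((k+1 : ℕ) : ℝ) + D) + ENNReal.ofReal (1/2)) := by
      show (∑' k : ℕ, cibpQ α β j (k+1) * cibpT α β D 0 (k+1))
          + ENNReal.ofReal (1/2) * (∑' k : ℕ, cibpQ α β j (k+1) * cibpS α β 0 (k+1)) = _
      rw [← ENNReal.tsum_mul_left, ← ENNReal.tsum_add]
      apply tsum_congr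
      intro k
      show cibpQ α β j (k+1) * ENNReal.ofReal (((k+1 : ℕ) : ℝ) + D)
          + ENNReal.ofReal (1/2) * (cibpQ α β j (k+1) * 1) = _
      rw [mul_add, mul_one]
      ring
    rw [hcomb]
    exact key_drift hα hβ hD hDkey j hj
  | succ M ih =>
    intro j hj
    have hcomb : cibpT α β D (M+2) j + ENNReal.ofReal (1/2) * cibpS α β (M+2) j
        = ∑' k : ℕ, cibpQ α β j (k+1) *
            (cibpT α β D (M+1) (k+1) + ENNReal.ofReal (1/2) * cibpS α β (M+1) (k+1)) := by
      show (∑' k : ℕ, cibpQ α β j (k+1) * cibpT α β D (M+1) (k+1))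
          + ENNReal.ofReal (1/2) * (∑' k : ℕ, cibpQ α β j (k+1) * cibpS α β (M+1) (k+1)) = _
      rw [← ENNReal.tsum_mul_left, ← ENNReal.tsum_add]
      apply tsum_congr
      intro k
      rw [mul_add]
      ring
    rw [hcomb]
    calc ∑' k : ℕ, cibpQ α β j (k+1) *
            (cibpT α β D (M+1) (k+1) + ENNReal.ofReal (1/2) * cibpS α β (M+1) (k+1))
        ≤ ∑' k : ℕ, cibpQ α β j (k+1) * cibpT α β D M (k+1) :=
          ENNReal.tsum_le_tsum fun k => mul_le_mul_right (ih (k+1) (Nat.le_add_left 1 k)) _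
      _ = cibpT α β D (M+1) j := rfl

lemma T_telescope (hα : 0 < α) (hβ : 0 < β) {D : ℝ} (hD : 0 ≤ D)
    (hDkey : ∀ j : ℕ, 1 ≤ j →
      cibpLam α β j + (D + 1/2) - (D + 1/2) * Real.exp (-(cibpLam α β j)) ≤ (j:ℝ) + D)
    (j : ℕ) (hj : 1 ≤ j) :
    ∀ M, cibpT α β D M j
        + ENNReal.ofReal (1/2) * ∑ i ∈ Finset.range M, cibpS α β (i+1) j
      ≤ ENNReal.ofReal ((j:ℝ) + D) := by
  intro M
  induction M with
  | zero => simp [cibpT]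
  | succ M ih =>
    rw [Finset.sum_range_succ, mul_add]
    calc cibpT α β D (M+1) j + (ENNReal.ofReal (1/2) * ∑ i ∈ Finset.range M, cibpS α β (i+1) j
          + ENNReal.ofReal (1/2) * cibpS α β (M+1) j)
        = (cibpT α β D (M+1) j + ENNReal.ofReal (1/2) * cibpS α β (M+1) j)
          + ENNReal.ofReal (1/2) * ∑ i ∈ Finset.range M, cibpS α β (i+1) j := by ring
      _ ≤ cibpT α β D M j + ENNReal.ofReal (1/2) * ∑ i ∈ Finset.range M, cibpS α β (i+1) j :=
          add_le_add_left (T_step hα hβ hD hDkey M j hj) _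
      _ ≤ ENNReal.ofReal ((j:ℝ) + D) := ih

/-- The quantitative survival bound: `(M/2) * S M j ≤ j + D`. -/
lemma S_bound (hα : 0 < α) (hβ : 0 < β) {D : ℝ} (hD : 0 ≤ D)
    (hDkey : ∀ j : ℕ, 1 ≤ j →
      cibpLam α β j + (D + 1/2) - (D + 1/2) * Real.exp (-(cibpLam α β j)) ≤ (j:ℝ) + D)
    (j : ℕ) (hj : 1 ≤ j) (M : ℕ) :
    (M : ℝ≥0∞) * (ENNReal.ofReal (1/2) * cibpS α β M j) ≤ ENNReal.ofReal ((j:ℝ) + D) := by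
  have h1 : (M : ℝ≥0∞) * cibpS α β M j ≤ ∑ i ∈ Finset.range M, cibpS α β (i+1) j := by
    calc (M : ℝ≥0∞) * cibpS α β M j = ∑ _i ∈ Finset.range M, cibpS α β M j := by
          simp [Finset.sum_const, mul_comm]
      _ ≤ ∑ i ∈ Finset.range M, cibpS α β (i+1) j :=
          Finset.sum_le_sum fun i hi =>
            S_antitone hα hβ j (Nat.succ_le_of_lt (Finset.mem_range.1 hi))
  calc (M : ℝ≥0∞) * (ENNReal.ofReal (1/2) * cibpS α β M j)
      = ENNReal.ofReal (1/2) * ((M : ℝ≥0∞) * cibpS α β M j) := by ring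
    _ ≤ ENNReal.ofReal (1/2) * ∑ i ∈ Finset.range M, cibpS α β (i+1) j :=
        mul_le_mul_right h1 _
    _ ≤ cibpT α β D M j + ENNReal.ofReal (1/2) * ∑ i ∈ Finset.range M, cibpS α β (i+1) j :=
        le_add_self
    _ ≤ ENNReal.ofReal ((j:ℝ) + D) := T_telescope hα hβ hD hDkey j hj M

end kernel

open scoped ENNReal

section measlayer

variable {Ω : Type*} [MeasurableSpace Ω]

lemma meas_cyl (K : ℕ → Ω → ℕ) (hmeas : ∀ m, Measurable (K m)) (m : ℕ) (p : ℕ → ℕ) :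
    MeasurableSet {ω | ∀ i ≤ m, K i ω = p i} := by
  have h : {ω | ∀ i ≤ m, K i ω = p i} = ⋂ i, ⋂ _ : i ≤ m, (K i) ⁻¹' {p i} := by
    ext ω; simp [Set.mem_iInter]
  rw [h]
  exact MeasurableSet.iInter fun i => MeasurableSet.iInter fun _ =>
    hmeas i (measurableSet_singleton _)

lemma meas_surv (K : ℕ → Ω → ℕ) (hmeas : ∀ m, Measurable (K m)) (m M : ℕ) (p : ℕ → ℕ) :
    MeasurableSet {ω | (∀ i ≤ m, K i ω = p i) ∧ ∀ l, m < l → l ≤ m + M → K l ω ≠ 0} := by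
  have h : {ω | (∀ i ≤ m, K i ω = p i) ∧ ∀ l, m < l → l ≤ m + M → K l ω ≠ 0}
      = {ω | ∀ i ≤ m, K i ω = p i} ∩ ⋂ l, ⋂ _ : m < l, ⋂ _ : l ≤ m + M, ((K l) ⁻¹' {0})ᶜ := by
    ext ω; simp [Set.mem_iInter]
  rw [h]
  exact (meas_cyl K hmeas m p).inter <| MeasurableSet.iInter fun l =>
    MeasurableSet.iInter fun _ => MeasurableSet.iInter fun _ =>
      (hmeas l (measurableSet_singleton _)).compl

end measlayer

/-- CIBP termination with constant parameters: a Markov chain on `ℕ` whose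
transition distribution from state `j` is Poisson with mean `λ(j)` is absorbed
at `0` with probability one. The Markov property is expressed via
finite-dimensional distributions. -/
theorem cibp_terminates (α β : ℝ) (hα : 0 < α) (hβ : 0 < β)
    {Ω : Type*} [MeasurableSpace Ω] (μ : Measure Ω) [IsProbabilityMeasure μ]
    (K : ℕ → Ω → ℕ) (hmeas : ∀ m, Measurable (K m))
    (hMarkov : ∀ (m : ℕ) (k : ℕ) (hist : ℕ → ℕ),
      μ {ω | K (m + 1) ω = k ∧ ∀ i ≤ m, K i ω = hist i} =
        ENNReal.ofReal (poisProb (cibpLam α β (hist m)) k) *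
          μ {ω | ∀ i ≤ m, K i ω = hist i}) :
    μ {ω | ∃ m, K m ω = 0} = 1 := by
  classical
  obtain ⟨D, hD0, hDkey⟩ := exists_D hα hβ
  -- Main path-decomposition lemma
  have lemH : ∀ (M m : ℕ) (p : ℕ → ℕ),
      μ {ω | (∀ i ≤ m, K i ω = p i) ∧ ∀ l, m < l → l ≤ m + M → K l ω ≠ 0}
        = μ {ω | ∀ i ≤ m, K i ω = p i} * cibpS α β M (p m) := by
    intro M
    induction M with
    | zero =>
      intro m p
      have hset : {ω | (∀ i ≤ m, K i ω = p i) ∧ ∀ l, m < l → l ≤ m + 0 → K l ω ≠ 0}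
          = {ω | ∀ i ≤ m, K i ω = p i} := by
        ext ω
        simp only [Set.mem_setOf_eq, and_iff_left_iff_imp]
        intro _ l h1 h2
        omega
      rw [hset]
      simp [cibpS]
    | succ M ih =>
      intro m p
      set p' : ℕ → ℕ → ℕ := fun k => Function.update p (m+1) (k+1) with hp'
      set A : ℕ → Set Ω := fun k =>
        {ω | (∀ i ≤ m+1, K i ω = p' k i) ∧ ∀ l, m+1 < l → l ≤ (m+1) + M → K l ω ≠ 0} with hA
      have hupe : ∀ k, p' k (m+1) = k+1 := fun k => Function.update_self _ _ _
      have hupn : ∀ k i, i ≠ m+1 → p' k i = p i := fun k i hi => Function.update_of_ne hi _ _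
      have hunion : {ω | (∀ i ≤ m, K i ω = p i) ∧ ∀ l, m < l → l ≤ m + (M+1) → K l ω ≠ 0}
          = ⋃ k, A k := by
        ext ω
        simp only [hA, Set.mem_setOf_eq, Set.mem_iUnion]
        constructor
        · rintro ⟨h1, h2⟩
          have hne : K (m+1) ω ≠ 0 := h2 (m+1) (by omega) (by omega)
          obtain ⟨k, hk⟩ := Nat.exists_eq_succ_of_ne_zero hne
          refine ⟨k, fun i hi => ?_, fun l hl1 hl2 => h2 l (by omega) (by omega)⟩
          rcases eq_or_ne i (m+1) with rfl | hne'
          · rw [hupe k]; exact hk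
          · rw [hupn k i hne']; exact h1 i (by omega)
        · rintro ⟨k, h1, h2⟩
          refine ⟨fun i hi => ?_, fun l hl1 hl2 => ?_⟩
          · have hh := h1 i (by omega)
            rwa [hupn k i (by omega)] at hh
          · rcases eq_or_ne l (m+1) with rfl | hne'
            · have hh := h1 (m+1) le_rfl
              rw [hupe k] at hh
              omega
            · exact h2 l (by omega) (by omega)
      have hdisj : Pairwise (Function.onFun Disjoint A) := by
        intro k k' hkk'
        simp only [Function.onFun, hA]
        rw [Set.disjoint_left]
        intro ω hω hω'
        simp only [Set.mem_setOf_eq] at hω hω'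
        have e1 : K (m+1) ω = k+1 := by
          have hh := hω.1 (m+1) le_rfl; rwa [hupe k] at hh
        have e2 : K (m+1) ω = k'+1 := by
          have hh := hω'.1 (m+1) le_rfl; rwa [hupe k'] at hh
        omega
      have hmeasA : ∀ k, MeasurableSet (A k) := by
        intro k
        rw [hA]
        exact meas_surv K hmeas (m+1) M (p' k)
      have hterm : ∀ k, μ (A k)
          = cibpQ α β (p m) (k+1) * cibpS α β M (k+1) * μ {ω | ∀ i ≤ m, K i ω = p i} := by
        intro k
        have h1 := ih (m+1) (p' k)
        rw [hupe k] at h1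
        have hcylset : {ω | ∀ i ≤ m+1, K i ω = p' k i}
            = {ω | K (m+1) ω = (k+1) ∧ ∀ i ≤ m, K i ω = p' k i} := by
          ext ω
          simp only [Set.mem_setOf_eq]
          constructor
          · intro h
            exact ⟨by rw [← hupe k]; exact h (m+1) le_rfl, fun i hi => h i (by omega)⟩
          · rintro ⟨ha, hb⟩ i hi
            rcases eq_or_ne i (m+1) with rfl | hne'
            · rw [hupe k]; exact ha
            · exact hb i (by omega)
        have hcyl2 : {ω | ∀ i ≤ m, K i ω = p' k i} = {ω | ∀ i ≤ m, K i ω = p i} := by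
          ext ω
          simp only [Set.mem_setOf_eq]
          constructor
          · intro h i hi
            have hh := h i hi; rwa [hupn k i (by omega)] at hh
          · intro h i hi
            rw [hupn k i (by omega)]; exact h i hi
        have hmark := hMarkov m (k+1) (p' k)
        rw [hupn k m (by omega), hcyl2] at hmark
        have hcylval : μ {ω | ∀ i ≤ m+1, K i ω = p' k i}
            = cibpQ α β (p m) (k+1) * μ {ω | ∀ i ≤ m, K i ω = p i} := by
          rw [hcylset]
          exact hmark
        calc μ (A k)
            = μ {ω | ∀ i ≤ m+1, K i ω = p' k i} * cibpS α β M (k+1) := h1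
          _ = cibpQ α β (p m) (k+1) * μ {ω | ∀ i ≤ m, K i ω = p i} * cibpS α β M (k+1) := by
              rw [hcylval]
          _ = cibpQ α β (p m) (k+1) * cibpS α β M (k+1) * μ {ω | ∀ i ≤ m, K i ω = p i} := by
              ring
      rw [hunion, measure_iUnion hdisj hmeasA]
      have hS : cibpS α β (M+1) (p m) = ∑' k : ℕ, cibpQ α β (p m) (k+1) * cibpS α β M (k+1) :=
        rfl
      rw [hS, mul_comm, ← ENNReal.tsum_mul_right]
      exact tsum_congr hterm
  -- Partition over the starting state
  set G : ℕ → Set Ω := fun j => (K 0) ⁻¹' {j} with hG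
  have hGmeas : ∀ j, MeasurableSet (G j) := fun j => hmeas 0 (measurableSet_singleton _)
  have hGdisj : Pairwise (Function.onFun Disjoint G) := by
    intro j j' hjj'
    simp only [Function.onFun, hG]
    rw [Set.disjoint_left]
    intro ω h1 h2
    simp only [Set.mem_preimage, Set.mem_singleton_iff] at h1 h2
    exact hjj' (h1 ▸ h2 ▸ rfl)
  have hGtot : ∑' j, μ (G j) = 1 := by
    rw [← measure_iUnion hGdisj hGmeas]
    have hu : ⋃ j, G j = Set.univ := by
      ext ω; simp [hG]
    rw [hu, measure_univ]
  -- the survival events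
  set E : ℕ → Set Ω := fun M => {ω | ∀ l ≤ M, K l ω ≠ 0} with hE
  have hEmeas : ∀ M, MeasurableSet (E M) := by
    intro M
    have h : E M = ⋂ l, ⋂ _ : l ≤ M, ((K l) ⁻¹' {0})ᶜ := by
      ext ω; simp [hE, Set.mem_iInter]
    rw [h]
    exact MeasurableSet.iInter fun l => MeasurableSet.iInter fun _ =>
      (hmeas l (measurableSet_singleton _)).compl
  have hEval : ∀ M j, μ (E M ∩ G (j+1)) = μ (G (j+1)) * cibpS α β M (j+1) := by
    intro M j
    have hset : E M ∩ G (j+1)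
        = {ω | (∀ i ≤ 0, K i ω = (fun _ => j+1) i) ∧ ∀ l, 0 < l → l ≤ 0 + M → K l ω ≠ 0} := by
      ext ω
      simp only [hE, hG, Set.mem_inter_iff, Set.mem_setOf_eq, Set.mem_preimage,
        Set.mem_singleton_iff]
      constructor
      · rintro ⟨h1, h2⟩
        refine ⟨fun i hi => ?_, fun l hl1 hl2 => h1 l (by omega)⟩
        have hi0 : i = 0 := by omega
        subst hi0; exact h2
      · rintro ⟨h1, h2⟩
        refine ⟨fun l hl => ?_, h1 0 le_rfl⟩
        rcases Nat.eq_zero_or_pos l with rfl | hl0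
        · rw [h1 0 le_rfl]; omega
        · exact h2 l hl0 (by omega)
    have hcyl0 : {ω | ∀ i ≤ 0, K i ω = (fun _ => j+1) i} = G (j+1) := by
      ext ω
      simp [hG, Nat.le_zero]
    rw [hset, lemH M 0 (fun _ => j+1), hcyl0]
  have hE0 : ∀ M, E M ∩ G 0 = ∅ := by
    intro M
    ext ω
    simp only [hE, hG, Set.mem_inter_iff, Set.mem_setOf_eq, Set.mem_preimage,
      Set.mem_singleton_iff, Set.mem_empty_iff_false, iff_false, not_and]
    intro h1 h2
    exact h1 0 (Nat.zero_le M) h2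
  have hEmeasure : ∀ M, μ (E M) = ∑' j, μ (E M ∩ G j) := by
    intro M
    have hu : E M = ⋃ j, E M ∩ G j := by
      rw [← Set.inter_iUnion]
      have hu2 : ⋃ j, G j = Set.univ := by ext ω; simp [hG]
      rw [hu2, Set.inter_univ]
    have hmu := measure_iUnion (μ := μ)
      (fun j j' hjj' => (hGdisj hjj').mono Set.inter_subset_right Set.inter_subset_right)
      (fun j => (hEmeas M).inter (hGmeas j))
    rw [← hu] at hmu
    exact hmu
  have hsubset : ∀ M, {ω | ∃ m, K m ω = 0}ᶜ ⊆ E M := by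
    intro M ω hω
    simp only [Set.mem_compl_iff, Set.mem_setOf_eq, not_exists] at hω
    intro l _
    exact hω l
  -- quantitative bound on each term
  have hq2 : ENNReal.ofReal (1/2 : ℝ) = 2⁻¹ := by
    rw [show (1/2 : ℝ) = (2:ℝ)⁻¹ by norm_num, ENNReal.ofReal_inv_of_pos (by norm_num)]
    norm_num
  have hSle : ∀ (M j : ℕ), (M:ℝ≥0∞) ≠ 0 → (M:ℝ≥0∞) ≠ ⊤ →
      cibpS α β M (j+1) ≤ 2 * ENNReal.ofReal (((j:ℝ)+1) + D) / M := by
    intro M j hM0 hMt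
    have hb := S_bound hα hβ hD0 hDkey (j+1) (Nat.le_add_left 1 j) M
    rw [hq2] at hb
    have hcast : (((j+1:ℕ)):ℝ) = (j:ℝ)+1 := by push_cast; ring
    rw [hcast] at hb
    calc cibpS α β M (j+1)
        = 2 * (2⁻¹ * cibpS α β M (j+1)) := by
          rw [← mul_assoc, ENNReal.mul_inv_cancel (by norm_num) (by norm_num), one_mul]
      _ = 2 * ((2⁻¹ * cibpS α β M (j+1)) * ((M:ℝ≥0∞) / M)) := by
          rw [ENNReal.div_self hM0 hMt, mul_one]
      _ = 2 * ((M:ℝ≥0∞) * (2⁻¹ * cibpS α β M (j+1))) / M := by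
          rw [div_eq_mul_inv, div_eq_mul_inv]; ring
      _ ≤ 2 * ENNReal.ofReal (((j:ℝ)+1) + D) / M :=
          ENNReal.div_le_div_right (mul_le_mul_right hb 2) _
  -- conclude
  have hmeasTarget : MeasurableSet {ω | ∃ m, K m ω = 0} := by
    have h : {ω | ∃ m, K m ω = 0} = ⋃ m, (K m) ⁻¹' {0} := by
      ext ω; simp
    rw [h]
    exact MeasurableSet.iUnion fun m => hmeas m (measurableSet_singleton _)
  rw [← MeasureTheory.prob_compl_eq_zero_iff hmeasTarget]
  refine le_antisymm ?_ zero_le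
  refine ENNReal.le_of_forall_pos_le_add fun ε hε _ => ?_
  rw [zero_add]
  set ε2 : ℝ≥0∞ := (ε : ℝ≥0∞) / 2 with hε2
  have hεne : (ε : ℝ≥0∞) ≠ 0 := by exact_mod_cast hε.ne'
  have hε2ne : ε2 ≠ 0 := by
    simp [hε2, ENNReal.div_eq_zero_iff, hεne]
  have hε2t : ε2 ≠ ⊤ := by
    rw [hε2]
    exact (ENNReal.div_lt_top ENNReal.coe_ne_top (by norm_num)).ne
  -- a finset capturing most of the initial mass
  obtain ⟨s, hs⟩ : ∃ s : Finset ℕ, ∑' j, (if j ∈ s then 0 else μ (G j)) ≤ ε2 := by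
    rcases le_or_gt 1 ε2 with hcase | hcase
    · refine ⟨∅, ?_⟩
      calc ∑' j, (if j ∈ (∅:Finset ℕ) then 0 else μ (G j))
          ≤ ∑' j, μ (G j) := ENNReal.tsum_le_tsum fun j => by split <;> simp
        _ = 1 := hGtot
        _ ≤ ε2 := hcase
    · have h1 : (1:ℝ≥0∞) - ε2 < 1 := ENNReal.sub_lt_self ENNReal.one_ne_top one_ne_zero hε2ne
      have h1' : (1:ℝ≥0∞) - ε2 < ∑' j, μ (G j) := by rw [hGtot]; exact h1
      rw [ENNReal.tsum_eq_iSup_sum] at h1'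
      obtain ⟨s, hs'⟩ := lt_iSup_iff.1 h1' 
      refine ⟨s, ?_⟩
      have e1 : ∑' j, (if j ∈ s then μ (G j) else 0) = ∑ j ∈ s, μ (G j) := by
        rw [tsum_eq_sum (s := s) (fun b hb => by simp [hb])]
        exact Finset.sum_congr rfl fun j hj => by simp [hj]
      have hsplit : (∑ j ∈ s, μ (G j)) + ∑' j, (if j ∈ s then 0 else μ (G j)) = 1 := by
        rw [← hGtot, ← e1, ← ENNReal.tsum_add]
        exact tsum_congr fun j => by split <;> simp
      have hfint : (∑ j ∈ s, μ (G j)) ≠ ⊤ := by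
        refine ne_top_of_le_ne_top ENNReal.one_ne_top ?_
        rw [← hsplit]
        exact le_self_add
      have hone : (1:ℝ≥0∞) ≤ ∑ j ∈ s, μ (G j) + ε2 := by
        calc (1:ℝ≥0∞) = (1 - ε2) + ε2 := (tsub_add_cancel_of_le hcase.le).symm
          _ ≤ ∑ j ∈ s, μ (G j) + ε2 := add_le_add_left hs'.le _
      have h2 : (∑ j ∈ s, μ (G j)) + ∑' j, (if j ∈ s then 0 else μ (G j))
          ≤ (∑ j ∈ s, μ (G j)) + ε2 := by
        rw [hsplit]; exact hone
      exact (ENNReal.add_le_add_iff_left hfint).1 h2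
  -- choose the time horizon M
  set Cs : ℝ≥0∞ := ∑ j ∈ s, 2 * ENNReal.ofReal ((j:ℝ) + D) with hCs
  have hCst : Cs ≠ ⊤ := by
    rw [hCs]
    exact (ENNReal.sum_lt_top.2 fun j _ =>
      ENNReal.mul_lt_top (by norm_num) ENNReal.ofReal_lt_top).ne
  obtain ⟨M0, hM0lt⟩ := ENNReal.exists_nat_gt (ENNReal.div_lt_top hCst hε2ne).ne
  set M := M0 + 1 with hM
  have hMlt : Cs / ε2 < (M:ℝ≥0∞) := lt_of_lt_of_le hM0lt (by exact_mod_cast Nat.le_succ M0)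
  have hMne : (M:ℝ≥0∞) ≠ 0 := by
    simp [hM]
  have hMt : (M:ℝ≥0∞) ≠ ⊤ := ENNReal.natCast_ne_top M
  have hCsM : Cs / M ≤ ε2 := by
    have h1 : Cs ≤ ε2 * M := by
      calc Cs = Cs / ε2 * ε2 := (ENNReal.div_mul_cancel hε2ne hε2t).symm
        _ ≤ (M:ℝ≥0∞) * ε2 := mul_le_mul_left hMlt.le _
        _ = ε2 * M := mul_comm _ _
    calc Cs / M ≤ ε2 * M / M := ENNReal.div_le_div_right h1 _
      _ = ε2 * ((M:ℝ≥0∞) / M) := by rw [mul_div_assoc]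
      _ = ε2 := by rw [ENNReal.div_self hMne hMt, mul_one]
  -- termwise bound
  have hterm2 : ∀ j : ℕ, μ (E M ∩ G j) ≤ 2 * ENNReal.ofReal ((j:ℝ) + D) / M := by
    intro j
    cases j with
    | zero =>
      rw [hE0 M]
      simp
    | succ j =>
      rw [hEval M j]
      have hle1 : μ (G (j+1)) * cibpS α β M (j+1) ≤ cibpS α β M (j+1) := by
        calc μ (G (j+1)) * cibpS α β M (j+1) ≤ 1 * cibpS α β M (j+1) :=
              mul_le_mul_left prob_le_one _
          _ = cibpS α β M (j+1) := one_mul _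
      refine hle1.trans ?_
      have := hSle M j hMne hMt
      have hcast : ((((j+1):ℕ)):ℝ) + D = ((j:ℝ)+1) + D := by push_cast; ring
      rw [hcast]
      exact this
  -- final chain
  calc μ {ω | ∃ m, K m ω = 0}ᶜ
      ≤ μ (E M) := measure_mono (hsubset M)
    _ = ∑' j, μ (E M ∩ G j) := hEmeasure M
    _ = ∑' j, ((if j ∈ s then μ (E M ∩ G j) else 0) + (if j ∈ s then 0 else μ (E M ∩ G j))) :=
        tsum_congr fun j => by split <;> simp
    _ = (∑' j, (if j ∈ s then μ (E M ∩ G j) else 0))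
        + ∑' j, (if j ∈ s then 0 else μ (E M ∩ G j)) := ENNReal.tsum_add
    _ ≤ (∑' j, (if j ∈ s then μ (E M ∩ G j) else 0)) + ε2 := by
        refine add_le_add_right (le_trans (ENNReal.tsum_le_tsum fun j => ?_) hs) _
        split
        · exact le_rfl
        · exact measure_mono Set.inter_subset_right
    _ ≤ Cs / M + ε2 := by
        refine add_le_add_left ?_ _
        have e1 : ∑' j, (if j ∈ s then μ (E M ∩ G j) else 0) = ∑ j ∈ s, μ (E M ∩ G j) := by
          rw [tsum_eq_sum (s := s) (fun b hb => by simp [hb])]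
          exact Finset.sum_congr rfl fun j hj => by simp [hj]
        rw [e1]
        calc ∑ j ∈ s, μ (E M ∩ G j)
            ≤ ∑ j ∈ s, 2 * ENNReal.ofReal ((j:ℝ) + D) / M :=
              Finset.sum_le_sum fun j _ => hterm2 j
          _ = Cs / M := by
              rw [hCs]
              simp only [div_eq_mul_inv, Finset.sum_mul]
    _ ≤ ε2 + ε2 := add_le_add_left hCsM _
    _ = ε := by
        rw [hε2, ENNReal.add_halves]
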